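/- Commutation of mutation with folding for Y-seeds: let Q̃ be a quiver with an admissible action of a finite group G, Q = Q̃/ᵥG the valued orbit quiver, k a vertex of Q, and suppose the action of G on the mutated quiver Q̃' = ∏_{k̃∈k} μ_{k̃}(Q̃) is still admissible. Let π be the semifield morphism ℚ_sf(y_ĩ : ĩ∈Ĩ) → ℚ_sf(y_i : i∈I) sending y_ĩ to y_i (i the orbit of ĩ). If (Q', Y') = μ_k(Q, Y) is the valued Y-seed mutation and (Q̃', Ỹ') is the result of applying the mutations μ_{k̃}, k̃∈k, to (Q̃, Ỹ), then π(Ỹ'_ĩ) = Y'_i for every vertex ĩ of orbit i. -/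
import Mathlib

open scoped Classical BigOperators

/-- Fomin–Zelevinsky matrix mutation at the vertex `k`. -/
noncomputable def matMut {V : Type*} (B : V → V → ℤ) (k : V) : V → V → ℤ :=
  fun i j =>
    if i = k ∨ j = k then -B i j
    else B i j + Int.sign (B i k) * max 0 (B i k * B k j)

/-- Mutation of the tuple of `Y`-variables of a (valued) `Y`-seed at the vertex `k`,
with values in a semifield. -/
noncomputable def yMut {V : Type*} {S : Type*} [Semifield S]
    (B : V → V → ℤ) (Y : V → S) (k : V) : V → S :=
  fun j =>
    if j = k then (Y k)⁻¹
    else if 0 ≤ B k j then Y j * (1 + (Y k)⁻¹) ^ (-(B k j))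
    else Y j * (1 + Y k) ^ (-(B k j))

/-- One mutation step on a `Y`-seed `(B, Y)`. -/
noncomputable def seedMut {V : Type*} {S : Type*} [Semifield S]
    (s : (V → V → ℤ) × (V → S)) (k : V) : (V → V → ℤ) × (V → S) :=
  (matMut s.1 k, yMut s.1 s.2 k)

lemma list_prod_zpow_neg {α S : Type*} [CommGroupWithZero S] (u : S) (hu : u ≠ 0)
    (L : List α) (f : α → ℤ) :
    (L.map (fun z => u ^ (-(f z)))).prod = u ^ (-((L.map f).sum)) := by
  induction L with
  | nil => simp
  | cons a t ih =>
    simp only [List.map_cons, List.prod_cons, List.sum_cons, ih, neg_add]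
    rw [zpow_add₀ hu]

lemma fold_inv {Vt : Type*} [DecidableEq Vt] {G : Type*} [Group G] [MulAction G Vt]
    (Bt : Vt → Vt → ℤ) (k : Vt)
    (hnoloop : ∀ x y : Vt, y ∈ MulAction.orbit G x → Bt x y = 0)
    {St : Type*} [Semifield St] (Yt : Vt → St)
    (m : List Vt) (hm : m.Nodup) (hmsub : ∀ x ∈ m, x ∈ MulAction.orbit G k) :
    (∀ z ∈ MulAction.orbit G k, z ∉ m → ∀ j, (m.foldl seedMut (Bt, Yt)).1 z j = Bt z j) ∧
    (∀ j ∈ MulAction.orbit G k,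
      (m.foldl seedMut (Bt, Yt)).2 j = if j ∈ m then (Yt j)⁻¹ else Yt j) ∧
    (∀ j, j ∉ MulAction.orbit G k → (m.foldl seedMut (Bt, Yt)).2 j
        = Yt j * (m.map (fun z => if 0 ≤ Bt z j then (1 + (Yt z)⁻¹) ^ (-(Bt z j))
            else (1 + Yt z) ^ (-(Bt z j)))).prod) := by
  have hzero : ∀ z w : Vt, z ∈ MulAction.orbit G k → w ∈ MulAction.orbit G k → Bt z w = 0 := by
    intro z w hz hw
    apply hnoloop
    obtain ⟨g, rfl⟩ := hz
    obtain ⟨h, rfl⟩ := hw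
    exact ⟨h * g⁻¹, by simp [mul_smul]⟩
  induction m using List.reverseRecOn with
  | nil => simp
  | append_singleton m a ih =>
    have hmnd : m.Nodup := hm.of_append_left
    have ham : a ∉ m := by
      have := List.disjoint_of_nodup_append hm
      intro h; exact this h (by simp)
    have hmsub' : ∀ x ∈ m, x ∈ MulAction.orbit G k := fun x hx => hmsub x (by simp [hx])
    have ha : a ∈ MulAction.orbit G k := hmsub a (by simp)
    obtain ⟨hA, hB, hC⟩ := ih hmnd hmsub'
    set P := m.foldl seedMut (Bt, Yt) with hP
    have hfold : (m ++ [a]).foldl seedMut (Bt, Yt) = (matMut P.1 a, yMut P.1 P.2 a) := by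
      rw [List.foldl_append]
      rfl
    have hBa : ∀ j, P.1 a j = Bt a j := hA a ha ham
    have hZa : P.2 a = Yt a := by rw [hB a ha, if_neg ham]
    rw [hfold]
    refine ⟨?_, ?_, ?_⟩
    · intro z hz hzm j
      have hzm' : z ∉ m := fun h => hzm (by simp [h])
      have hza : z ≠ a := fun h => hzm (by simp [h])
      have hza0 : P.1 z a = Bt z a := hA z hz hzm' a
      have hBt0 : Bt z a = 0 := hzero z a hz ha
      have hzj : P.1 z j = Bt z j := hA z hz hzm' j
      simp only [matMut]
      by_cases hja : j = a
      · subst hja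
        rw [if_pos (Or.inr rfl), hza0, hBt0, neg_zero]
      · rw [if_neg (by tauto), hza0, hBt0]
        simpa using hzj
    · intro j hj
      simp only [yMut]
      by_cases hja : j = a
      · subst hja
        rw [if_pos rfl, hZa, if_pos (by simp)]
      · have h0 : P.1 a j = 0 := by rw [hBa j]; exact hzero a j ha hj
        rw [if_neg hja, h0, if_pos le_rfl]
        simp only [neg_zero, zpow_zero, mul_one]
        rw [hB j hj]
        by_cases hjm : j ∈ m
        · rw [if_pos hjm, if_pos (by simp [hjm])]
        · rw [if_neg hjm, if_neg (by simp [hjm, hja])]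
    · intro j hj
      have hja : j ≠ a := fun h => hj (h ▸ ha)
      simp only [yMut]
      rw [if_neg hja, hBa j, hZa, hC j hj]
      rw [List.map_append, List.prod_append]
      by_cases hs : 0 ≤ Bt a j
      · rw [if_pos hs]
        simp [hs, mul_assoc]
      · rw [if_neg hs]
        simp [hs, mul_assoc]

theorem folding_commutes_with_y_seed_mutation
    {Vt : Type*} [Fintype Vt] [DecidableEq Vt]
    {G : Type*} [Group G] [Fintype G] [MulAction G Vt]
    (Bt : Vt → Vt → ℤ)
    (hskew : ∀ x y, Bt y x = -Bt x y)
    (hinv : ∀ (g : G) (x y : Vt), Bt (g • x) (g • y) = Bt x y)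
    -- admissibility of the action on the original quiver:
    (hnoloop : ∀ x y : Vt, y ∈ MulAction.orbit G x → Bt x y = 0)
    (hno2cycle : ∀ x y x' y' : Vt, x' ∈ MulAction.orbit G x → y' ∈ MulAction.orbit G y →
      0 < Bt x y → 0 ≤ Bt x' y')
    (k : Vt) (l : List Vt) (hl : l.Nodup) (hlmem : ∀ x, x ∈ l ↔ x ∈ MulAction.orbit G k)
    {St S : Type*} [Semifield St] [Semifield S] (π : St →+* S)
    (Yt : Vt → St) (Y : Vt → S)
    (hπY : ∀ x, π (Yt x) = Y x)
    (hYconst : ∀ (g : G) (x : Vt), Y (g • x) = Y x)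
    (hYt0 : ∀ x, Yt x ≠ 0) (hY0 : ∀ x, Y x ≠ 0)
    (h1 : 1 + Y k ≠ 0) (h2 : 1 + (Y k)⁻¹ ≠ 0)
    (h1t : ∀ x ∈ MulAction.orbit G k, 1 + Yt x ≠ 0 ∧ 1 + (Yt x)⁻¹ ≠ 0)
    -- admissibility of the action on the mutated quiver:
    (hnoloop' : ∀ x y : Vt, y ∈ MulAction.orbit G x → (l.foldl seedMut (Bt, Yt)).1 x y = 0)
    (hno2cycle' : ∀ x y x' y' : Vt, x' ∈ MulAction.orbit G x → y' ∈ MulAction.orbit G y →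
      0 < (l.foldl seedMut (Bt, Yt)).1 x y → 0 ≤ (l.foldl seedMut (Bt, Yt)).1 x' y') :
    ∀ j : Vt,
      π ((l.foldl seedMut (Bt, Yt)).2 j) =
        if j ∈ MulAction.orbit G k then (Y k)⁻¹
        else if 0 ≤ ∑ z ∈ Finset.univ.filter (· ∈ MulAction.orbit G k), Bt z j then
          Y j * (1 + (Y k)⁻¹) ^ (-(∑ z ∈ Finset.univ.filter (· ∈ MulAction.orbit G k), Bt z j))
        else Y j * (1 + Y k) ^ (-(∑ z ∈ Finset.univ.filter (· ∈ MulAction.orbit G k), Bt z j)) := by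
  intro j
  obtain ⟨hA, hB, hC⟩ := fold_inv Bt k hnoloop Yt l hl (fun x hx => (hlmem x).1 hx)
  have hYorb : ∀ z ∈ MulAction.orbit G k, Y z = Y k := by
    rintro z ⟨g, rfl⟩; exact hYconst g k
  by_cases hj : j ∈ MulAction.orbit G k
  · rw [if_pos hj, hB j hj, if_pos ((hlmem j).2 hj), map_inv₀, hπY, hYorb j hj]
  · rw [if_neg hj, hC j hj]
    have hsum : (∑ z ∈ Finset.univ.filter (· ∈ MulAction.orbit G k), Bt z j)
        = (l.map (fun z => Bt z j)).sum := by
      have hset : Finset.univ.filter (· ∈ MulAction.orbit G k) = l.toFinset := by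
        ext x; simp [hlmem]
      rw [hset, List.sum_toFinset _ hl]
    -- project the product by π
    rw [map_mul, hπY, map_list_prod, List.map_map]
    have hπc : ∀ z ∈ l,
        (π ∘ fun z => if 0 ≤ Bt z j then (1 + (Yt z)⁻¹) ^ (-(Bt z j))
            else (1 + Yt z) ^ (-(Bt z j))) z
          = if 0 ≤ Bt z j then (1 + (Y k)⁻¹) ^ (-(Bt z j)) else (1 + Y k) ^ (-(Bt z j)) := by
      intro z hz
      have hzorb := (hlmem z).1 hz
      have hYz : π (Yt z) = Y k := by rw [hπY, hYorb z hzorb]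
      simp only [Function.comp_apply, apply_ite π, map_zpow₀, map_add, map_one, map_inv₀, hYz]
    rw [List.map_congr_left hπc, hsum]
    by_cases hpos : ∃ z ∈ l, 0 < Bt z j
    · obtain ⟨z0, hz0l, hz0⟩ := hpos
      have hall : ∀ z ∈ l, 0 ≤ Bt z j := by
        intro z hz
        refine hno2cycle z0 j z j ?_ (MulAction.mem_orbit_self j) hz0
        obtain ⟨g, rfl⟩ := (hlmem z0).1 hz0l
        obtain ⟨h, rfl⟩ := (hlmem z).1 hz
        exact ⟨h * g⁻¹, by simp [mul_smul]⟩
      have hS : 0 ≤ (l.map (fun z => Bt z j)).sum :=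
        List.sum_nonneg (by intro x hx; obtain ⟨z, hz, rfl⟩ := List.mem_map.1 hx; exact hall z hz)
      rw [if_pos hS]
      congr 1
      rw [List.map_congr_left (fun z hz => if_pos (hall z hz)),
        show (fun z => (1 + (Y k)⁻¹) ^ (-(Bt z j)))
          = (fun z => (1 + (Y k)⁻¹) ^ (-((fun z => Bt z j) z))) from rfl,
        list_prod_zpow_neg _ h2]
    · push_neg at hpos
      have hall : ∀ z ∈ l, Bt z j ≤ 0 := fun z hz => hpos z hz
      have hprod : (l.map (fun z => if 0 ≤ Bt z j then (1 + (Y k)⁻¹) ^ (-(Bt z j))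
            else (1 + Y k) ^ (-(Bt z j)))).prod = (1 + Y k) ^ (-((l.map (fun z => Bt z j)).sum)) := by
        rw [List.map_congr_left (g := fun z => (1 + Y k) ^ (-((fun z => Bt z j) z))) ?_,
          list_prod_zpow_neg _ h1]
        intro z hz
        show _ = (1 + Y k) ^ (-(Bt z j))
        rcases lt_or_eq_of_le (hall z hz) with h | h
        · rw [if_neg (not_le.2 h)]
        · rw [if_pos (le_of_eq h.symm), h]
          simp
      rw [hprod]
      have hS : (l.map (fun z => Bt z j)).sum ≤ 0 := by
        rw [← hsum]
        exact Finset.sum_nonpos fun z hz => hall z ((hlmem z).2 (Finset.mem_filter.1 hz).2)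
      by_cases hS0 : 0 ≤ (l.map (fun z => Bt z j)).sum
      · rw [if_pos hS0]
        have : (l.map (fun z => Bt z j)).sum = 0 := le_antisymm hS hS0
        rw [this]; simp
      · rw [if_neg hS0]
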